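/- Let W : Fin n → Fin n → ℝ≥0 with W balanced (row sum i = column sum i = u_i ∈ ℤ for all i), and additionally suppose every entry of W is rational. Then there exists W* : Fin n → Fin n → ℕ with W*_{ij} = 0 whenever W_{ij} = 0 and with all row and column sums of W* equal to those of W. -/

import Mathlib

open scoped NNReal

theorem rational_integer_balancing {n : ℕ} (W : Fin n → Fin n → ℝ≥0)
    (u : Fin n → ℕ)
    (hbal : ∀ i, ∑ j, W i j = ∑ k, W k i)
    (hint : ∀ i, ∑ j, W i j = (u i : ℝ≥0))
    (hrat : ∀ i j, ∃ q : ℚ, (W i j : ℝ) = (q : ℝ)) :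
    ∃ Wstar : Fin n → Fin n → ℕ,
      (∀ i j, W i j = 0 → Wstar i j = 0) ∧
      (∀ i, ∑ j, (Wstar i j : ℝ≥0) = ∑ j, W i j) ∧
      (∀ i, ∑ k, (Wstar k i : ℝ≥0) = ∑ k, W k i) := by
  classical
  choose q hq using hrat
  have hq0 : ∀ i j, 0 ≤ q i j := by
    intro i j
    have h : (0 : ℝ) ≤ (q i j : ℝ) := (hq i j) ▸ (W i j).coe_nonneg
    exact_mod_cast h
  -- row sums of q
  have hrow : ∀ i, ∑ j, q i j = (u i : ℚ) := by
    intro i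
    have h : ((∑ j, q i j : ℚ) : ℝ) = ((u i : ℚ) : ℝ) := by
      push_cast
      have h1 : ((∑ j, W i j : ℝ≥0) : ℝ) = ((u i : ℝ≥0) : ℝ) := by rw [hint i]
      rw [NNReal.coe_sum] at h1
      simp only [← hq] at *
      simpa using h1
    exact_mod_cast h
  have hcol : ∀ i, ∑ k, q k i = (u i : ℚ) := by
    intro i
    have h : ((∑ k, q k i : ℚ) : ℝ) = ((u i : ℚ) : ℝ) := by
      push_cast
      have h1 : ((∑ k, W k i : ℝ≥0) : ℝ) = ((u i : ℝ≥0) : ℝ) := by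
        rw [← hbal i, hint i]
      rw [NNReal.coe_sum] at h1
      simp only [← hq] at *
      simpa using h1
    exact_mod_cast h
  have hzr : ∀ i j, u i = 0 → q i j = 0 := by
    intro i j h
    have hs : ∑ j, q i j = 0 := by rw [hrow i, h]; norm_num
    exact (Finset.sum_eq_zero_iff_of_nonneg (fun j _ => hq0 i j)).1 hs j (Finset.mem_univ j)
  have hzc : ∀ i j, u j = 0 → q i j = 0 := by
    intro i j h
    have hs : ∑ k, q k j = 0 := by rw [hcol j, h]; norm_num
    exact (Finset.sum_eq_zero_iff_of_nonneg (fun k _ => hq0 k j)).1 hs i (Finset.mem_univ i)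
  -- the blown-up doubly stochastic matrix
  set α := (i : Fin n) × Fin (u i) with hα
  set B : Matrix α α ℚ := fun x y => q x.1 y.1 / ((u x.1 : ℚ) * (u y.1 : ℚ)) with hB
  have hpos : ∀ x : α, (0 : ℚ) < (u x.1 : ℚ) := fun x => by exact_mod_cast x.2.pos
  have hBmem : B ∈ doublyStochastic ℚ α := by
    rw [mem_doublyStochastic_iff_sum]
    refine ⟨fun x y => div_nonneg (hq0 _ _) (by positivity), ?_, ?_⟩
    · intro x
      calc ∑ y : α, B x y
          = ∑ j, ∑ _b : Fin (u j), q x.1 j / ((u x.1 : ℚ) * (u j : ℚ)) := by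
            rw [← Finset.univ_sigma_univ, Finset.sum_sigma]
        _ = ∑ j, q x.1 j / (u x.1 : ℚ) := by
            refine Finset.sum_congr rfl fun j _ => ?_
            rw [Finset.sum_const, Finset.card_univ, Fintype.card_fin, nsmul_eq_mul]
            rcases Nat.eq_zero_or_pos (u j) with h | h
            · simp [h, hzc x.1 j h]
            · have hj : ((u j : ℚ)) ≠ 0 := by exact_mod_cast h.ne'
              have hx : ((u x.1 : ℚ)) ≠ 0 := (hpos x).ne'
              field_simp
        _ = 1 := by
            rw [← Finset.sum_div, hrow, div_self (hpos x).ne']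
    · intro y
      calc ∑ x : α, B x y
          = ∑ k, ∑ _a : Fin (u k), q k y.1 / ((u k : ℚ) * (u y.1 : ℚ)) := by
            rw [← Finset.univ_sigma_univ, Finset.sum_sigma]
        _ = ∑ k, q k y.1 / (u y.1 : ℚ) := by
            refine Finset.sum_congr rfl fun k _ => ?_
            rw [Finset.sum_const, Finset.card_univ, Fintype.card_fin, nsmul_eq_mul]
            rcases Nat.eq_zero_or_pos (u k) with h | h
            · simp [h, hzr k y.1 h]
            · have hk : ((u k : ℚ)) ≠ 0 := by exact_mod_cast h.ne'
              have hy : ((u y.1 : ℚ)) ≠ 0 := (hpos y).ne'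
              field_simp
        _ = 1 := by
            rw [← Finset.sum_div, hcol, div_self (hpos y).ne']
  obtain ⟨w, hw0, hw1, hweq⟩ := exists_eq_sum_perm_of_mem_doublyStochastic hBmem
  have hσ : ∃ σ : Equiv.Perm α, 0 < w σ := by
    by_contra h
    push_neg at h
    have : ∀ σ : Equiv.Perm α, w σ = 0 := fun σ => le_antisymm (h σ) (hw0 σ)
    rw [Finset.sum_congr rfl (fun σ _ => this σ)] at hw1
    simp at hw1
  obtain ⟨σ, hσpos⟩ := hσ
  have hBpos : ∀ x : α, 0 < B x (σ x) := by
    intro x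
    have h := congrFun (congrFun hweq x) (σ x)
    rw [Matrix.sum_apply] at h
    have hterm : ∀ τ : Equiv.Perm α,
        (w τ • τ.permMatrix ℚ) x (σ x) = w τ * (if σ x = τ x then 1 else 0) := by
      intro τ
      simp [Equiv.Perm.permMatrix, PEquiv.toMatrix_apply, Equiv.toPEquiv_apply,
        Option.mem_def, eq_comm]
    have hle : w σ ≤ ∑ τ : Equiv.Perm α, (w τ • τ.permMatrix ℚ) x (σ x) := by
      have := Finset.single_le_sum
        (f := fun τ : Equiv.Perm α => (w τ • τ.permMatrix ℚ) x (σ x))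
        (fun τ _ => by show 0 ≤ (w τ • τ.permMatrix ℚ) x (σ x); rw [hterm τ]; split <;> simp [hw0 τ]) (Finset.mem_univ σ)
      simpa [hterm σ] using this
    rw [h] at hle
    exact lt_of_lt_of_le hσpos hle
  have hqpos : ∀ x : α, q x.1 (σ x).1 ≠ 0 := by
    intro x hx
    have h := hBpos x
    rw [hB] at h
    simp only [hx, zero_div] at h
    exact lt_irrefl 0 h
  -- the integer matrix
  refine ⟨fun i j => (Finset.univ.filter fun a : Fin (u i) => (σ ⟨i, a⟩).1 = j).card,
    ?_, ?_, ?_⟩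
  · intro i j hW
    rw [Finset.card_eq_zero, Finset.filter_eq_empty_iff]
    intro a _
    intro hcontra
    apply hqpos ⟨i, a⟩
    show q i (σ ⟨i, a⟩).1 = 0
    rw [hcontra]
    have : (q i j : ℝ) = 0 := by rw [← hq i j, hW]; simp
    exact_mod_cast this
  · intro i
    have hnat : ∑ j, (Finset.univ.filter fun a : Fin (u i) => (σ ⟨i, a⟩).1 = j).card = u i := by
      calc ∑ j, (Finset.univ.filter fun a : Fin (u i) => (σ ⟨i, a⟩).1 = j).card
          = ∑ j, ∑ a : Fin (u i), if (σ ⟨i, a⟩).1 = j then 1 else 0 := by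
            refine Finset.sum_congr rfl fun j _ => ?_
            rw [Finset.card_filter]
        _ = ∑ a : Fin (u i), ∑ j, if (σ ⟨i, a⟩).1 = j then 1 else 0 := Finset.sum_comm
        _ = ∑ _a : Fin (u i), 1 := by
            refine Finset.sum_congr rfl fun a _ => ?_
            rw [Finset.sum_ite_eq (Finset.univ) ((σ ⟨i, a⟩).1) (fun _ => 1)]
            simp
        _ = u i := by simp
    rw [hint i, ← Nat.cast_sum, hnat]
  · intro j
    have hnat : ∑ k, (Finset.univ.filter fun a : Fin (u k) => (σ ⟨k, a⟩).1 = j).card = u j := by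
      calc ∑ k, (Finset.univ.filter fun a : Fin (u k) => (σ ⟨k, a⟩).1 = j).card
          = ∑ k, ∑ a : Fin (u k), if (σ ⟨k, a⟩).1 = j then 1 else 0 := by
            refine Finset.sum_congr rfl fun k _ => ?_
            rw [Finset.card_filter]
        _ = ∑ x : α, if (σ x).1 = j then 1 else 0 := by
            rw [← Finset.univ_sigma_univ, Finset.sum_sigma]
        _ = ∑ y : α, if y.1 = j then 1 else 0 :=
            Fintype.sum_equiv σ _ _ (fun x => rfl)
        _ = ∑ k, ∑ _a : Fin (u k), if k = j then 1 else 0 := by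
            rw [← Finset.univ_sigma_univ, Finset.sum_sigma]
        _ = u j := by
            simp [Finset.sum_ite_eq]
    rw [← hbal j, hint j, ← Nat.cast_sum, hnat]
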